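/- (Theorem 1 (ii), (a)⇔(d).) Let n ≥ 2, 2 ≤ p ≤ ∞, Ω ⊆ ℝⁿ open and u ∈ C²(Ω). Then the following are equivalent: (a) for every a ∈ ℝⁿ, the function x ↦ u(x) + aᵀx satisfies Δ_p[u + aᵀx] ≤ 0 at every point of Ω; (d) D_p u ≤ 0 at every point of Ω. -/

import Mathlib

open scoped ENNReal
open Filter Matrix

noncomputable section

/-- Hessian matrix of `u` at `x` (entries are second partial derivatives). -/
def hess {n : ℕ} (u : EuclideanSpace ℝ (Fin n) → ℝ) (x : EuclideanSpace ℝ (Fin n)) :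
    Matrix (Fin n) (Fin n) ℝ :=
  Matrix.of fun i j =>
    iteratedFDeriv ℝ 2 u x ![EuclideanSpace.single i 1, EuclideanSpace.single j 1]

/-- Laplacian: trace of the Hessian. -/
def lapl {n : ℕ} (u : EuclideanSpace ℝ (Fin n) → ℝ) (x : EuclideanSpace ℝ (Fin n)) : ℝ :=
  ∑ i, hess u x i i

/-- Quadratic form `zᵀ A z`. -/
def quadForm {n : ℕ} (A : Matrix (Fin n) (Fin n) ℝ) (z : EuclideanSpace ℝ (Fin n)) : ℝ :=
  ∑ i, ∑ j, z i * A i j * z j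

/-- Largest eigenvalue of a (symmetric) matrix: the max of `zᵀAz` over unit vectors `z`. -/
def lamMax {n : ℕ} (A : Matrix (Fin n) (Fin n) ℝ) : ℝ :=
  sSup {r : ℝ | ∃ z : EuclideanSpace ℝ (Fin n), ‖z‖ = 1 ∧ r = quadForm A z}

open Classical in
/-- Dominative p-Laplacian `D_p u(x)`, for `2 ≤ p ≤ ∞`. -/
def Dop {n : ℕ} (p : ℝ≥0∞) (u : EuclideanSpace ℝ (Fin n) → ℝ)
    (x : EuclideanSpace ℝ (Fin n)) : ℝ :=
  if p = ⊤ then lamMax (hess u x)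
  else (p.toReal - 2) * lamMax (hess u x) + lapl u x

open Classical in
/-- p-Laplacian `Δ_p u(x)` (the `∞`-Laplacian `∇u H u ∇uᵀ` for `p = ∞`).
For finite `p`, `Δ_p u = |∇u|^{p-2} Δu + (p-2)|∇u|^{p-4} ∇u Hu ∇uᵀ` with real powers,
which is automatically `0` at critical points when `p > 2` and `Δu` when `p = 2`. -/
def DeltaOp {n : ℕ} (p : ℝ≥0∞) (u : EuclideanSpace ℝ (Fin n) → ℝ)
    (x : EuclideanSpace ℝ (Fin n)) : ℝ :=
  if p = ⊤ then quadForm (hess u x) (gradient u x)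
  else ‖gradient u x‖ ^ (p.toReal - 2) * lapl u x
    + (p.toReal - 2) * ‖gradient u x‖ ^ (p.toReal - 4) * quadForm (hess u x) (gradient u x)

open Classical in
/-- Radial profile `W_{k,p}` of the fundamental solution of the p-Laplace equation in ℝᵏ. -/
def Wfun (p : ℝ≥0∞) (k : ℕ) (r : ℝ) : ℝ :=
  if p = ⊤ ∨ k = 1 then -r
  else if p.toReal = k then -Real.log r
  else -((p.toReal - 1) / (p.toReal - k)) * r ^ ((p.toReal - k) / (p.toReal - 1))

/-- Euclidean norm of a plain vector in `Fin k → ℝ`. -/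
def enorm' {k : ℕ} (v : Fin k → ℝ) : ℝ := Real.sqrt (∑ i, v i ^ 2)

/-- `u : Ω → (-∞,∞]` is a viscosity supersolution of `G(∇u, Hu) = 0` on `Ω`:
lower semicontinuous, `> -∞`, finite on a dense subset of `Ω`, and every `C²`
test function `φ` touching `u` from below at `x₀ ∈ Ω` satisfies `G φ x₀ ≤ 0`. -/
def ViscSupersol {n : ℕ}
    (G : (EuclideanSpace ℝ (Fin n) → ℝ) → EuclideanSpace ℝ (Fin n) → ℝ)
    (Ω : Set (EuclideanSpace ℝ (Fin n))) (u : EuclideanSpace ℝ (Fin n) → EReal) : Prop :=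
  LowerSemicontinuousOn u Ω ∧
  (∀ x ∈ Ω, u x ≠ ⊥) ∧
  Ω ⊆ closure {x | x ∈ Ω ∧ u x ≠ ⊤} ∧
  ∀ x₀ ∈ Ω, ∀ φ : EuclideanSpace ℝ (Fin n) → ℝ,
    ContDiffAt ℝ 2 φ x₀ → (φ x₀ : EReal) = u x₀ →
    (∀ᶠ x in nhdsWithin x₀ Ω, (φ x : EReal) ≤ u x) → G φ x₀ ≤ 0

open Classical in
/-- EReal-valued fundamental solution `w_{m,p}` on ℝᵐ, equal to `⊤` at the pole when `p ≤ m`,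
`p ≠ ∞`. -/
def wEReal (p : ℝ≥0∞) (m : ℕ) (x : EuclideanSpace ℝ (Fin m)) : EReal :=
  if x = 0 ∧ p ≤ (m : ℝ≥0∞) ∧ p ≠ ⊤ then (⊤ : EReal)
  else ((Wfun p m ‖x‖ : ℝ) : EReal)

end

noncomputable section
section Helpers

open InnerProductSpace

variable {n : ℕ}

local notation "E" => EuclideanSpace ℝ (Fin n)

lemma linear_eq_innerSL (a : E) : (fun y : E => ∑ i, a i * y i) = fun y => (innerSL ℝ a) y := by
  funext y
  simp [PiLp.inner_apply, RCLike.inner_apply, conj_trivial]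
  exact Finset.sum_congr rfl fun i _ => mul_comm _ _

lemma hess_add_linear {u : E → ℝ} {Ω : Set E} (hΩ : IsOpen Ω) (hu : ContDiffOn ℝ 2 u Ω)
    (a : E) {x : E} (hx : x ∈ Ω) :
    hess (fun y => u y + ∑ i, a i * y i) x = hess u x := by
  have hL : ContDiffOn ℝ 2 (fun y : E => ∑ i, a i * y i) Ω := by
    rw [linear_eq_innerSL]
    exact (innerSL ℝ a).contDiff.contDiffOn
  have key : ∀ m : Fin 2 → E,
      iteratedFDeriv ℝ 2 (fun y => u y + ∑ i, a i * y i) x m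
        = iteratedFDeriv ℝ 2 u x m := by
    intro m
    have h1 := iteratedFDerivWithin_add_apply' (i := 2) (hu x hx) (hL x hx) hΩ.uniqueDiffOn hx
    have h2 : iteratedFDeriv ℝ 2 (fun y : E => ∑ i, a i * y i) x m = 0 := by
      rw [iteratedFDeriv_two_apply]
      rw [linear_eq_innerSL]
      have : fderiv ℝ (fun y : E => (innerSL ℝ a) y) = fun _ => innerSL ℝ a := by
        funext y; exact (innerSL ℝ a).fderiv
      rw [this, fderiv_const_apply]
      simp
    calc iteratedFDeriv ℝ 2 (fun y => u y + ∑ i, a i * y i) x m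
        = iteratedFDerivWithin ℝ 2 (fun y => u y + ∑ i, a i * y i) Ω x m := by
          rw [iteratedFDerivWithin_of_isOpen 2 hΩ hx]
      _ = iteratedFDerivWithin ℝ 2 u Ω x m + iteratedFDerivWithin ℝ 2
            (fun y : E => ∑ i, a i * y i) Ω x m := by rw [h1]; rfl
      _ = iteratedFDeriv ℝ 2 u x m + iteratedFDeriv ℝ 2
            (fun y : E => ∑ i, a i * y i) x m := by
          rw [iteratedFDerivWithin_of_isOpen 2 hΩ hx, iteratedFDerivWithin_of_isOpen 2 hΩ hx]
      _ = iteratedFDeriv ℝ 2 u x m := by rw [h2, add_zero]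
  ext i j
  exact key _

lemma lapl_add_linear {u : E → ℝ} {Ω : Set E} (hΩ : IsOpen Ω) (hu : ContDiffOn ℝ 2 u Ω)
    (a : E) {x : E} (hx : x ∈ Ω) :
    lapl (fun y => u y + ∑ i, a i * y i) x = lapl u x := by
  unfold lapl
  rw [hess_add_linear hΩ hu a hx]

lemma gradient_add_linear {u : E → ℝ} {Ω : Set E} (hΩ : IsOpen Ω) (hu : ContDiffOn ℝ 2 u Ω)
    (a : E) {x : E} (hx : x ∈ Ω) :
    gradient (fun y => u y + ∑ i, a i * y i) x = gradient u x + a := by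
  have hdiff : DifferentiableAt ℝ u x :=
    (hu.contDiffAt (hΩ.mem_nhds hx)).differentiableAt (by norm_num)
  have hL' : ∀ y : E, (innerSL ℝ a) y = ∑ i, a i * y i := fun y =>
    congrFun (linear_eq_innerSL a).symm y
  have hf : fderiv ℝ (fun y => u y + ∑ i, a i * y i) x = fderiv ℝ u x + innerSL ℝ a := by
    simp only [← hL']
    exact (hdiff.hasFDerivAt.add ((innerSL ℝ a).hasFDerivAt)).fderiv
  have hsymm : (toDual ℝ (EuclideanSpace ℝ (Fin n))).symm (innerSL ℝ a) = a := by
    have : toDual ℝ (EuclideanSpace ℝ (Fin n)) a = innerSL ℝ a := by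
      ext y; simp [InnerProductSpace.toDual_apply_apply]
    rw [← this, LinearIsometryEquiv.symm_apply_apply]
  show (toDual ℝ (EuclideanSpace ℝ (Fin n))).symm (fderiv ℝ _ x) = _
  rw [hf, map_add, hsymm]
  rfl

lemma quadForm_zero (A : Matrix (Fin n) (Fin n) ℝ) : quadForm A 0 = 0 := by
  simp [quadForm]

lemma quadForm_smul (A : Matrix (Fin n) (Fin n) ℝ) (c : ℝ) (z : E) :
    quadForm A (c • z) = c ^ 2 * quadForm A z := by
  unfold quadForm
  rw [Finset.mul_sum]
  refine Finset.sum_congr rfl fun i _ => ?_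
  rw [Finset.mul_sum]
  refine Finset.sum_congr rfl fun j _ => ?_
  have : ∀ k, (c • z) k = c * z k := fun k => rfl
  rw [this, this]; ring

lemma abs_coord_le_one {z : E} (hz : ‖z‖ = 1) (i : Fin n) : |z i| ≤ 1 := by
  have h1 : (inner ℝ (EuclideanSpace.single i (1:ℝ)) z : ℝ) = z i := by
    rw [EuclideanSpace.inner_single_left]; simp
  have h2 := abs_real_inner_le_norm (EuclideanSpace.single i (1:ℝ)) z
  rw [h1, hz, EuclideanSpace.norm_single] at h2
  simpa using h2

lemma bddAbove_quad (A : Matrix (Fin n) (Fin n) ℝ) :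
    BddAbove {r : ℝ | ∃ z : E, ‖z‖ = 1 ∧ r = quadForm A z} := by
  refine ⟨∑ i, ∑ j, |A i j|, fun r hr => ?_⟩
  obtain ⟨z, hz, rfl⟩ := hr
  refine Finset.sum_le_sum fun i _ => Finset.sum_le_sum fun j _ => ?_
  calc z i * A i j * z j ≤ |z i * A i j * z j| := le_abs_self _
    _ = |z i| * |A i j| * |z j| := by rw [abs_mul, abs_mul]
    _ ≤ |A i j| * |z j| :=
        mul_le_mul_of_nonneg_right
          (by simpa using mul_le_mul_of_nonneg_right (abs_coord_le_one hz i) (abs_nonneg (A i j)))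
          (abs_nonneg _)
    _ ≤ |A i j| * 1 := mul_le_mul_of_nonneg_left (abs_coord_le_one hz j) (abs_nonneg _)
    _ = |A i j| := mul_one _

lemma exists_unit (hn : 2 ≤ n) : ∃ z : E, ‖z‖ = 1 := by
  refine ⟨EuclideanSpace.single ⟨0, by omega⟩ (1:ℝ), ?_⟩
  simp [EuclideanSpace.norm_single]

lemma quadForm_le_lamMax (A : Matrix (Fin n) (Fin n) ℝ) {z : E} (hz : ‖z‖ = 1) :
    quadForm A z ≤ lamMax A :=
  le_csSup (bddAbove_quad A) ⟨z, hz, rfl⟩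

lemma lamMax_le (hn : 2 ≤ n) (A : Matrix (Fin n) (Fin n) ℝ) {c : ℝ}
    (h : ∀ z : E, ‖z‖ = 1 → quadForm A z ≤ c) : lamMax A ≤ c := by
  obtain ⟨z₀, hz₀⟩ := exists_unit (n := n) hn
  exact csSup_le ⟨quadForm A z₀, z₀, hz₀, rfl⟩ (by rintro r ⟨z, hz, rfl⟩; exact h z hz)

lemma quadForm_le_lamMax_mul (A : Matrix (Fin n) (Fin n) ℝ) (g : E) (hg : g ≠ 0) :
    quadForm A g ≤ lamMax A * ‖g‖ ^ 2 := by
  have hpos : (0:ℝ) < ‖g‖ := norm_pos_iff.mpr hg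
  set z : E := ‖g‖⁻¹ • g with hzdef
  have hz : ‖z‖ = 1 := by
    rw [hzdef, norm_smul]; simp [hpos.ne']
  have hq : quadForm A z = (‖g‖⁻¹) ^ 2 * quadForm A g := quadForm_smul A _ g
  have := quadForm_le_lamMax A hz
  rw [hq] at this
  have h2 : quadForm A g = ‖g‖ ^ 2 * ((‖g‖⁻¹) ^ 2 * quadForm A g) := by
    field_simp
  rw [h2]
  calc ‖g‖ ^ 2 * ((‖g‖⁻¹) ^ 2 * quadForm A g) ≤ ‖g‖ ^ 2 * lamMax A := by
        apply mul_le_mul_of_nonneg_left this (by positivity)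
    _ = lamMax A * ‖g‖ ^ 2 := mul_comm _ _

end Helpers
end

/-- Theorem 1 (ii), (a) ⇔ (d). -/
theorem stmt_9 {n : ℕ} (hn : 2 ≤ n) (p : ℝ≥0∞) (hp : 2 ≤ p)
    (Ω : Set (EuclideanSpace ℝ (Fin n))) (hΩ : IsOpen Ω)
    (u : EuclideanSpace ℝ (Fin n) → ℝ) (hu : ContDiffOn ℝ 2 u Ω) :
    (∀ a : EuclideanSpace ℝ (Fin n), ∀ x ∈ Ω,
        DeltaOp p (fun y => u y + ∑ i, a i * y i) x ≤ 0) ↔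
    (∀ x ∈ Ω, Dop p u x ≤ 0) := by
  constructor
  · intro h x hx
    by_cases hptop : p = ⊤
    · subst hptop
      simp only [Dop, if_pos rfl]
      refine lamMax_le hn _ fun z hz => ?_
      have h1 := h (z - gradient u x) x hx
      simp only [DeltaOp, if_pos rfl] at h1
      have hc : gradient u x + (z - gradient u x) = z := by abel
      rwa [hess_add_linear hΩ hu _ hx, gradient_add_linear hΩ hu _ hx, hc] at h1
    · have ht : (2:ℝ) ≤ p.toReal := by
        have := (ENNReal.toReal_le_toReal (by norm_num) hptop).mpr hp
        simpa using this
      have key : ∀ z : EuclideanSpace ℝ (Fin n), ‖z‖ = 1 →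
          lapl u x + (p.toReal - 2) * quadForm (hess u x) z ≤ 0 := by
        intro z hz
        have h1 := h (z - gradient u x) x hx
        simp only [DeltaOp, if_neg hptop] at h1
        have hc : gradient u x + (z - gradient u x) = z := by abel
        rw [hess_add_linear hΩ hu _ hx, lapl_add_linear hΩ hu _ hx,
          gradient_add_linear hΩ hu _ hx, hc, hz, Real.one_rpow, Real.one_rpow,
          one_mul] at h1
        linarith
      simp only [Dop, if_neg hptop]
      obtain hteq | htlt := eq_or_lt_of_le ht
      · obtain ⟨z₀, hz₀⟩ := exists_unit (n := n) hn
        have h1 := key z₀ hz₀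
        rw [← hteq] at h1 ⊢
        simp only [sub_self, zero_mul, add_zero, zero_add] at h1 ⊢
        linarith
      · have hL : lamMax (hess u x) ≤ (-(lapl u x)) / (p.toReal - 2) := by
          refine lamMax_le hn _ fun z hz => ?_
          have h1 := key z hz
          rw [le_div_iff₀ (by linarith)]
          linarith
        have h2 := mul_le_mul_of_nonneg_left hL (show (0:ℝ) ≤ p.toReal - 2 by linarith)
        have h3 : (p.toReal - 2) * ((-(lapl u x)) / (p.toReal - 2)) = -(lapl u x) := by
          rw [mul_comm, div_mul_cancel₀ _ (show p.toReal - 2 ≠ 0 by linarith)]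
        rw [h3] at h2
        linarith
  · intro h a x hx
    have hd := h x hx
    by_cases hptop : p = ⊤
    · subst hptop
      simp only [DeltaOp, eq_self_iff_true, if_true]
      simp only [Dop, eq_self_iff_true, if_true] at hd
      rw [hess_add_linear hΩ hu a hx, gradient_add_linear hΩ hu a hx]
      by_cases hg : gradient u x + a = 0
      · rw [hg, quadForm_zero]
      · have h1 := quadForm_le_lamMax_mul (hess u x) _ hg
        nlinarith [sq_nonneg ‖gradient u x + a‖]
    · have ht : (2:ℝ) ≤ p.toReal := by
        have := (ENNReal.toReal_le_toReal (by norm_num) hptop).mpr hp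
        simpa using this
      simp only [DeltaOp, if_neg hptop]
      simp only [Dop, if_neg hptop] at hd
      rw [hess_add_linear hΩ hu a hx, lapl_add_linear hΩ hu a hx,
        gradient_add_linear hΩ hu a hx]
      obtain hteq | htlt := eq_or_lt_of_le ht
      · rw [← hteq] at hd ⊢
        simp only [sub_self, zero_mul, add_zero, zero_add, Real.rpow_zero, one_mul] at hd ⊢
        linarith
      · by_cases hg : gradient u x + a = 0
        · rw [hg, quadForm_zero, norm_zero, Real.zero_rpow (by linarith : p.toReal - 2 ≠ 0)]
          simp
        · set g := gradient u x + a with hgdef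
          have hpos : (0:ℝ) < ‖g‖ := norm_pos_iff.mpr hg
          have hq := quadForm_le_lamMax_mul (hess u x) g hg
          have hrw : ‖g‖ ^ (p.toReal - 4) * ‖g‖ ^ (2:ℕ) = ‖g‖ ^ (p.toReal - 2) := by
            rw [← Real.rpow_natCast ‖g‖ 2, ← Real.rpow_add hpos]
            norm_num
            congr 1
            ring
          have h4 : (0:ℝ) ≤ ‖g‖ ^ (p.toReal - 2) := Real.rpow_nonneg (norm_nonneg _) _
          have h2 : (p.toReal - 2) * ‖g‖ ^ (p.toReal - 4) * quadForm (hess u x) g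
              ≤ (p.toReal - 2) * lamMax (hess u x) * ‖g‖ ^ (p.toReal - 2) := by
            have hnn : (0:ℝ) ≤ (p.toReal - 2) * ‖g‖ ^ (p.toReal - 4) := by
              have := Real.rpow_nonneg (norm_nonneg g) (p.toReal - 4)
              nlinarith
            calc (p.toReal - 2) * ‖g‖ ^ (p.toReal - 4) * quadForm (hess u x) g
                ≤ (p.toReal - 2) * ‖g‖ ^ (p.toReal - 4) *
                    (lamMax (hess u x) * ‖g‖ ^ 2) := by
                  rw [mul_assoc, mul_assoc]
                  exact mul_le_mul_of_nonneg_left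
                    (mul_le_mul_of_nonneg_left hq (Real.rpow_nonneg (norm_nonneg g) _))
                    (by linarith)
              _ = (p.toReal - 2) * lamMax (hess u x) *
                    (‖g‖ ^ (p.toReal - 4) * ‖g‖ ^ (2:ℕ)) := by ring
              _ = (p.toReal - 2) * lamMax (hess u x) * ‖g‖ ^ (p.toReal - 2) := by rw [hrw]
          have h5 := mul_le_mul_of_nonneg_left hd h4
          nlinarith [h2, h5]
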